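/- arXiv:2603.19419 — 6 statements merged into one kernel-verified Lean document; each statement's English description precedes it below -/
import Mathlib

section
/- Let γ be an ℓ-cover of a matroid M on a finite ground set, let F be a focal basis of γ (a basis of M with γ(F) = ℓ), and let G be a basis of M. Suppose A ⊆ F \ G and B ⊆ G \ F are such that (F \ A) ∪ B is a basis of M. Then γ(A) ≤ γ(B); moreover, if A ⊆ supp(γ) then B ⊆ supp(γ). -/
open Matroid

/-- The total weight `γ(F) = ∑_{i ∈ F} γ(i)` of a finite set `F` under `γ`. -/
noncomputable def setWt {α : Type*} [Fintype α] (γ : α → ℕ) (F : Set α) : ℕ :=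
  ∑ i ∈ F.toFinite.toFinset, γ i

/-- `γ` is an `ℓ`-cover of the family `𝒟` if `γ(F) ≥ ℓ` for every `F ∈ 𝒟`. -/
def IsCoverOn {α : Type*} [Fintype α] (𝒟 : Set (Set α)) (ℓ : ℕ) (γ : α → ℕ) : Prop :=
  ∀ F ∈ 𝒟, ℓ ≤ setWt γ F

lemma setWt_union {α : Type*} [Fintype α] (γ : α → ℕ) {S T : Set α}
    (h : Disjoint S T) : setWt γ (S ∪ T) = setWt γ S + setWt γ T := by
  classical
  unfold setWt
  have hd : Disjoint S.toFinite.toFinset T.toFinite.toFinset := by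
    simp only [Finset.disjoint_left, Set.Finite.mem_toFinset]
    exact fun a ha hb => h.ne_of_mem ha hb rfl
  rw [← Finset.sum_union hd]
  apply Finset.sum_congr _ (fun _ _ => rfl)
  ext x; simp only [Set.Finite.mem_toFinset, Finset.mem_union]; exact Set.mem_union x S T

lemma setWt_singleton {α : Type*} [Fintype α] (γ : α → ℕ) (a : α) :
    setWt γ {a} = γ a := by
  unfold setWt
  rw [Finset.sum_eq_single a] <;> simp

lemma setWt_insert {α : Type*} [Fintype α] (γ : α → ℕ) {a : α} {S : Set α}
    (h : a ∉ S) : setWt γ (insert a S) = γ a + setWt γ S := by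
  rw [show insert a S = {a} ∪ S by simp, setWt_union γ (by simpa using h),
    setWt_singleton]

lemma setWt_diff_add {α : Type*} [Fintype α] (γ : α → ℕ) {S A : Set α}
    (h : A ⊆ S) : setWt γ (S \ A) + setWt γ A = setWt γ S := by
  rw [← setWt_union γ Set.disjoint_sdiff_left, Set.diff_union_of_subset h]

/-- if `γ` is an `ℓ`-cover of a matroid `M`, `F` is a focal basis of `γ`
(`M.Base F` and `γ(F) = ℓ`), `G` is a basis, `A ⊆ F \ G`, `B ⊆ G \ F`, and `(F \ A) ∪ B`
is a basis, then `γ(A) ≤ γ(B)`, and `A ⊆ supp γ` implies `B ⊆ supp γ`. -/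
theorem stmt0 {α : Type*} [Fintype α] (M : Matroid α) (hE : M.E = Set.univ)
    (ℓ : ℕ) (γ : α → ℕ) (hcov : IsCoverOn {F | M.IsBase F} ℓ γ)
    (F G : Set α) (hF : M.IsBase F) (hFfocal : setWt γ F = ℓ) (hG : M.IsBase G)
    (A B : Set α) (hA : A ⊆ F \ G) (hB : B ⊆ G \ F)
    (hbase : M.IsBase ((F \ A) ∪ B)) :
    setWt γ A ≤ setWt γ B ∧
      (A ⊆ Function.support γ → B ⊆ Function.support γ) := by
  have hAF : A ⊆ F := fun x hx => (hA hx).1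
  have hBF : ∀ x ∈ B, x ∉ F := fun x hx => (hB hx).2
  have hdisj : Disjoint (F \ A) B := by
    rw [Set.disjoint_right]
    exact fun x hx hx' => hBF x hx hx'.1
  constructor
  · have h1 : setWt γ (F \ A) + setWt γ A = ℓ := by
      rw [setWt_diff_add γ hAF, hFfocal]
    have h2 : ℓ ≤ setWt γ (F \ A) + setWt γ B := by
      rw [← setWt_union γ hdisj]
      exact hcov _ hbase
    omega
  · intro hAsupp b hb
    by_contra hb0
    simp only [Function.mem_support, not_not] at hb0
    -- use the dual exchange to find `a ∈ A` with `insert b (F \ {a})` a base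
    have hbF : b ∉ F := hBF b hb
    have hbH : b ∈ (F \ A) ∪ B := Or.inr hb
    have hFd : M✶.IsBase (M.E \ F) := hF.compl_isBase_dual
    have hHd : M✶.IsBase (M.E \ ((F \ A) ∪ B)) := hbase.compl_isBase_dual
    have hbmem : b ∈ (M.E \ F) \ (M.E \ ((F \ A) ∪ B)) := by
      refine ⟨⟨by rw [hE]; trivial, hbF⟩, fun h => h.2 hbH⟩
    obtain ⟨a, ha, hab⟩ := hFd.exchange hHd hbmem
    obtain ⟨⟨-, haH⟩, haE⟩ := ha
    have haF : a ∈ F := by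
      by_contra haF
      exact haE ⟨by rw [hE]; trivial, haF⟩
    have haA : a ∈ A := by
      by_contra haA
      exact haH (Set.mem_union_left _ ⟨haF, haA⟩)
    have hne : a ≠ b := fun h => hbF (h ▸ haF)
    -- complement of the exchanged dual base
    have hnew : M.IsBase (M.E \ insert a ((M.E \ F) \ {b})) := hab.compl_isBase_of_dual
    have heq : M.E \ insert a ((M.E \ F) \ {b}) = insert b (F \ {a}) := by
      rw [hE]
      ext x
      by_cases hx : x = b <;> by_cases hy : x = a <;>
        simp [hx, hy, hne, hne.symm, hbF, haF]
    rw [heq] at hnew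
    have hwt : setWt γ (insert b (F \ {a})) = γ b + setWt γ (F \ {a}) :=
      setWt_insert γ (fun h => hbF h.1)
    have hFsplit : setWt γ (F \ {a}) + γ a = ℓ := by
      have := setWt_diff_add γ (Set.singleton_subset_iff.2 haF)
      rwa [setWt_singleton, hFfocal] at this
    have hga : 0 < γ a := by
      have := hAsupp haA
      simpa [Function.mem_support, Nat.pos_iff_ne_zero] using this
    have hcov' := hcov _ hnew
    omega
end

section
/- Let γ be an ℓ-cover of a matroid M on a finite ground set and let F and G both be focal bases of γ. (i) If A ⊆ F \ G and B ⊆ G \ F are such that both (F \ A) ∪ B and (G \ B) ∪ A are bases of M, then γ(A) = γ(B), and A ⊆ supp(γ) if and only if B ⊆ supp(γ). (ii) If σ : (F \ G) → (G \ F) is a bijection such that (F \ {i}) ∪ {σ(i)} is a basis of M for every i ∈ F \ G, then γ(i) = γ(σ(i)) for every i ∈ F \ G. -/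
open Matroid

section Aux

variable {α : Type*} [Fintype α]

lemma wt_union (γ : α → ℕ) {A B : Set α} (h : Disjoint A B) :
    setWt γ (A ∪ B) = setWt γ A + setWt γ B := by
  classical
  unfold setWt
  rw [Set.Finite.toFinset_union (A.toFinite) (B.toFinite)]
  exact Finset.sum_union (by rw [Set.Finite.disjoint_toFinset]; exact h)

lemma wt_diff (γ : α → ℕ) {A F : Set α} (h : A ⊆ F) :
    setWt γ (F \ A) + setWt γ A = setWt γ F := by
  rw [← wt_union γ (Set.disjoint_sdiff_left (s := A) (t := F)), Set.diff_union_of_subset h]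

lemma wt_singleton (γ : α → ℕ) (i : α) : setWt γ {i} = γ i := by
  simp [setWt]

lemma key {M : Matroid α} {ℓ : ℕ} {γ : α → ℕ} (hcov : IsCoverOn {F | M.IsBase F} ℓ γ)
    {F A B : Set α} (hFf : setWt γ F = ℓ) (hA : A ⊆ F) (hB : Disjoint B F)
    (hbase : M.IsBase ((F \ A) ∪ B)) : setWt γ A ≤ setWt γ B := by
  have h1 : ℓ ≤ setWt γ ((F \ A) ∪ B) := hcov _ hbase
  rw [wt_union γ ((hB.mono_right Set.diff_subset).symm)] at h1
  have h2 := wt_diff γ hA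
  omega

lemma coexchange {M : Matroid α} (hE : M.E = Set.univ) {F H : Set α}
    (hF : M.IsBase F) (hH : M.IsBase H) {j : α} (hj : j ∈ H \ F) :
    ∃ y ∈ F \ H, M.IsBase ((F \ {y}) ∪ {j}) := by
  have h1 := hF.compl_isBase_dual
  have h2 := hH.compl_isBase_dual
  rw [hE] at h1 h2
  have hj' : j ∈ (Set.univ \ F) \ (Set.univ \ H) := by
    simp [hj.1, hj.2]
  obtain ⟨y, hy, hbase⟩ := h1.exchange h2 hj'
  simp only [Set.mem_diff, Set.mem_univ, true_and, not_not] at hy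
  refine ⟨y, ⟨hy.2, hy.1⟩, ?_⟩
  have hb := hbase.compl_isBase_of_dual
  rw [hE] at hb
  have hne : j ≠ y := by rintro rfl; exact hj.2 hy.2
  have hset : Set.univ \ insert y ((Set.univ \ F) \ {j}) = (F \ {y}) ∪ {j} := by
    ext x
    simp only [Set.mem_diff, Set.mem_univ, true_and, Set.mem_insert_iff, Set.mem_union,
      Set.mem_singleton_iff, not_or, not_and, not_not]
    constructor
    · rintro ⟨hxy, hx⟩
      by_cases hxF : x ∈ F
      · exact Or.inl ⟨hxF, hxy⟩
      · exact Or.inr (hx hxF)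
    · rintro (⟨hxF, hxy⟩ | rfl)
      · exact ⟨hxy, fun h => absurd hxF h⟩
      · exact ⟨hne, fun _ => rfl⟩
  rwa [hset] at hb

end Aux

/-- let `γ` be an `ℓ`-cover of a matroid `M`, and `F`, `G` focal bases of `γ`.
(i) If `A ⊆ F \ G`, `B ⊆ G \ F` and both `(F \ A) ∪ B` and `(G \ B) ∪ A` are bases, then
`γ(A) = γ(B)`, and `A ⊆ supp γ ↔ B ⊆ supp γ`.
(ii) If `σ : (F \ G) → (G \ F)` is a bijection with `(F \ {i}) ∪ {σ i}` a basis for every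
`i ∈ F \ G`, then `γ(i) = γ(σ i)` for every `i ∈ F \ G`. -/
theorem stmt2 {α : Type*} [Fintype α] (M : Matroid α) (hE : M.E = Set.univ)
    (ℓ : ℕ) (γ : α → ℕ) (hcov : IsCoverOn {F | M.IsBase F} ℓ γ)
    (F G : Set α) (hF : M.IsBase F) (hFfocal : setWt γ F = ℓ)
    (hG : M.IsBase G) (hGfocal : setWt γ G = ℓ) :
    (∀ A B : Set α, A ⊆ F \ G → B ⊆ G \ F →
      M.IsBase ((F \ A) ∪ B) → M.IsBase ((G \ B) ∪ A) →
      setWt γ A = setWt γ B ∧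
        (A ⊆ Function.support γ ↔ B ⊆ Function.support γ)) ∧
    (∀ σ : α → α, Set.BijOn σ (F \ G) (G \ F) →
      (∀ i ∈ F \ G, M.IsBase ((F \ {i}) ∪ {σ i})) →
      ∀ i ∈ F \ G, γ i = γ (σ i)) := by
  constructor
  · intro A B hA hB h1 h2
    have hAF : A ⊆ F := hA.trans Set.diff_subset
    have hBG : B ⊆ G := hB.trans Set.diff_subset
    have hBF : Disjoint B F := Set.disjoint_left.2 fun x hx => (hB hx).2
    have hAG : Disjoint A G := Set.disjoint_left.2 fun x hx => (hA hx).2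
    have e1 : setWt γ A ≤ setWt γ B := key hcov hFfocal hAF hBF h1
    have e2 : setWt γ B ≤ setWt γ A := key hcov hGfocal hBG hAG h2
    have heq : setWt γ A = setWt γ B := le_antisymm e1 e2
    refine ⟨heq, ?_⟩
    set H := (F \ A) ∪ B with hHdef
    have hHfocal : setWt γ H = ℓ := by
      rw [hHdef, wt_union γ (hBF.mono_right Set.diff_subset).symm, ← heq]
      have := wt_diff γ hAF
      omega
    have hFH : F \ H = A := by
      ext x
      simp only [hHdef, Set.mem_diff, Set.mem_union, not_or, not_and, not_not]
      constructor
      · rintro ⟨hxF, hx1, _⟩; exact hx1 hxF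
      · intro hxA
        exact ⟨hAF hxA, fun _ => hxA, fun hxB => (hBF.le_bot ⟨hxB, hAF hxA⟩)⟩
    have hHF : H \ F = B := by
      ext x
      simp only [hHdef, Set.mem_diff, Set.mem_union]
      constructor
      · rintro ⟨hx1 | hxB, hxF⟩
        · exact absurd hx1.1 hxF
        · exact hxB
      · intro hxB
        exact ⟨Or.inr hxB, fun hxF => hBF.le_bot ⟨hxB, hxF⟩⟩
    constructor
    · intro hsupp j hj
      have hjHF : j ∈ H \ F := hHF ▸ hj
      obtain ⟨y, hy, hb⟩ := coexchange hE hF h1 hjHF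
      have hyA : y ∈ A := hFH ▸ hy
      have hkey : setWt γ {y} ≤ setWt γ {j} :=
        key hcov hFfocal (Set.singleton_subset_iff.2 hy.1)
          (Set.disjoint_left.2 (by rintro x rfl; exact hjHF.2)) hb
      rw [wt_singleton, wt_singleton] at hkey
      have := hsupp hyA
      simp only [Function.mem_support] at this ⊢
      omega
    · intro hsupp i hi
      have hiFH : i ∈ F \ H := hFH ▸ hi
      obtain ⟨y, hy, hb⟩ := coexchange hE h1 hF hiFH
      have hyB : y ∈ B := hHF ▸ hy
      have hkey : setWt γ {y} ≤ setWt γ {i} :=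
        key hcov hHfocal (Set.singleton_subset_iff.2 hy.1)
          (Set.disjoint_left.2 (by rintro x rfl; exact hiFH.2)) hb
      rw [wt_singleton, wt_singleton] at hkey
      have := hsupp hyB
      simp only [Function.mem_support] at this ⊢
      omega
  · intro σ hσ hbases i hi
    have hle : ∀ j ∈ F \ G, γ j ≤ γ (σ j) := by
      intro j hj
      have hb := hbases j hj
      have hσj : σ j ∈ G \ F := hσ.mapsTo hj
      have hkey : setWt γ {j} ≤ setWt γ {σ j} :=
        key hcov hFfocal (Set.singleton_subset_iff.2 hj.1)
          (Set.disjoint_left.2 (by rintro x rfl; exact hσj.2)) hb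
      rwa [wt_singleton, wt_singleton] at hkey
    have hsum1 : setWt γ (F \ G) = setWt γ (G \ F) := by
      have h1 := wt_diff γ (Set.inter_subset_left : F ∩ G ⊆ F)
      have h2 := wt_diff γ (Set.inter_subset_right : F ∩ G ⊆ G)
      rw [Set.diff_self_inter] at h1
      rw [show G \ (F ∩ G) = G \ F by rw [Set.inter_comm]; exact Set.diff_self_inter] at h2
      omega
    have hsum2 : ∑ j ∈ (F \ G).toFinite.toFinset, γ (σ j) = setWt γ (G \ F) := by
      unfold setWt
      refine Finset.sum_bij (fun a _ => σ a) ?_ ?_ ?_ ?_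
      · intro a ha
        simp only [Set.Finite.mem_toFinset] at ha ⊢
        exact hσ.mapsTo ha
      · intro a ha b hb hab
        simp only [Set.Finite.mem_toFinset] at ha hb
        exact hσ.injOn ha hb hab
      · intro b hb
        simp only [Set.Finite.mem_toFinset] at hb
        obtain ⟨a, ha, rfl⟩ := hσ.surjOn hb
        exact ⟨a, by simpa using ha, rfl⟩
      · intros; rfl
    by_contra hne
    have hlt : γ i < γ (σ i) := lt_of_le_of_ne (hle i hi) hne
    have : ∑ j ∈ (F \ G).toFinite.toFinset, γ j <
        ∑ j ∈ (F \ G).toFinite.toFinset, γ (σ j) := by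
      refine Finset.sum_lt_sum (fun j hj => hle j (by simpa using hj)) ⟨i, by simpa using hi, hlt⟩
    rw [hsum2] at this
    exact absurd hsum1 (Nat.ne_of_lt this)
end

section
/- Let γ be a basic ℓ-cover of a matroid M on a finite ground set E. Then every non-loop element of M lies in a focal basis of γ: for every i ∈ E such that {i} is independent in M, there exists a basis F of M with i ∈ F and γ(F) = ℓ. -/
open Matroid

/-- An `ℓ`-cover is basic if no pointwise-smaller distinct function is an `ℓ`-cover. -/
def IsBasicCoverOn {α : Type*} [Fintype α] (𝒟 : Set (Set α)) (ℓ : ℕ) (γ : α → ℕ) : Prop :=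
  IsCoverOn 𝒟 ℓ γ ∧ ∀ γ' : α → ℕ, γ' ≤ γ → γ' ≠ γ → ¬ IsCoverOn 𝒟 ℓ γ'

lemma setWt_mono {α : Type*} [Fintype α] (γ : α → ℕ) {F G : Set α} (h : F ⊆ G) :
    setWt γ F ≤ setWt γ G := by
  apply Finset.sum_le_sum_of_subset
  intro x hx
  simp only [Set.Finite.mem_toFinset] at hx ⊢
  exact h hx

/-- decrementing γ at a point j decreases setWt by at most 1 -/
lemma setWt_update_ge {α : Type*} [Fintype α] [DecidableEq α] (γ : α → ℕ) (j : α)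
    (hj : 0 < γ j) (F : Set α) :
    setWt γ F ≤ setWt (Function.update γ j (γ j - 1)) F + 1 := by
  unfold setWt
  by_cases hjF : j ∈ F.toFinite.toFinset
  · rw [Finset.sum_update_of_mem hjF, ← Finset.add_sum_erase _ γ hjF, Finset.erase_eq]
    omega
  · have heq : ∑ x ∈ F.toFinite.toFinset, Function.update γ j (γ j - 1) x
        = ∑ x ∈ F.toFinite.toFinset, γ x :=
      Finset.sum_congr rfl fun x hx => Function.update_of_ne (by rintro rfl; exact hjF hx) _ γ
    omega

lemma setWt_update_eq_of_not_mem {α : Type*} [Fintype α] [DecidableEq α] (γ : α → ℕ) (j : α)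
    (v : ℕ) (F : Set α) (hjF : j ∉ F) :
    setWt (Function.update γ j v) F = setWt γ F := by
  unfold setWt
  refine Finset.sum_congr rfl (fun x hx => ?_)
  rw [Function.update_of_ne]
  rintro rfl
  exact hjF (by simpa using hx)

/-- existence of a focal basis -/
lemma exists_focal {α : Type*} [Fintype α] (M : Matroid α)
    (ℓ : ℕ) (γ : α → ℕ) (hbasic : IsBasicCoverOn {F | M.IsBase F} ℓ γ) :
    ∃ F, M.IsBase F ∧ setWt γ F = ℓ := by
  classical
  obtain ⟨F₀, hF₀⟩ := M.exists_isBase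
  rcases eq_or_lt_of_le (hbasic.1 F₀ hF₀) with h | h
  · exact ⟨F₀, hF₀, h.symm⟩
  · -- setWt γ F₀ > ℓ ≥ 0, so there is j with γ j > 0
    have hpos : 0 < setWt γ F₀ := lt_of_le_of_lt (Nat.zero_le ℓ) h
    obtain ⟨j, -, hj⟩ := Finset.exists_lt_of_sum_lt (f := fun _ => 0) (g := γ) (by simpa [setWt] using hpos)
    set γ' := Function.update γ j (γ j - 1) with hγ'
    have hle : γ' ≤ γ := by
      intro x
      rcases eq_or_ne x j with rfl | hx
      · simp [hγ']
      · simp [hγ', Function.update_of_ne hx]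
    have hne : γ' ≠ γ := by
      intro heq
      have := congrFun heq j
      simp [hγ'] at this
      omega
    have hnc := hbasic.2 γ' hle hne
    rw [IsCoverOn] at hnc
    push_neg at hnc
    obtain ⟨F, hF, hFlt⟩ := hnc
    refine ⟨F, hF, le_antisymm ?_ (hbasic.1 F hF)⟩
    have h2 := setWt_update_ge γ j hj F
    rw [← hγ'] at h2
    omega

/-- if `γ` is a basic `ℓ`-cover of a matroid `M` on finite ground set, then every
non-loop element (i.e. `{i}` independent) lies in some focal basis of `γ`. -/
theorem stmt4 {α : Type*} [Fintype α] (M : Matroid α) (hE : M.E = Set.univ)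
    (ℓ : ℕ) (γ : α → ℕ) (hbasic : IsBasicCoverOn {F | M.IsBase F} ℓ γ) :
    ∀ i : α, M.Indep {i} → ∃ F, M.IsBase F ∧ i ∈ F ∧ setWt γ F = ℓ := by
  classical
  intro i hi
  rcases Nat.eq_zero_or_pos (γ i) with hγi | hγi
  · -- γ i = 0 : extend via a focal basis
    obtain ⟨F, hF, hFℓ⟩ := exists_focal M ℓ γ hbasic
    obtain ⟨B, hB, hiB, hBsub⟩ := hi.exists_isBase_subset_union_isBase hF
    refine ⟨B, hB, hiB (Set.mem_singleton i), le_antisymm ?_ (hbasic.1 B hB)⟩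
    calc setWt γ B ≤ setWt γ ({i} ∪ F) := setWt_mono γ hBsub
    _ ≤ γ i + setWt γ F := by
        have hsub : ({i} ∪ F).toFinite.toFinset ⊆ insert i (F.toFinite.toFinset) := by
          intro x hx
          simp only [Set.Finite.mem_toFinset, Set.mem_union, Set.mem_singleton_iff] at hx
          simp only [Finset.mem_insert, Set.Finite.mem_toFinset]
          exact hx
        refine le_trans (Finset.sum_le_sum_of_subset hsub) ?_
        by_cases hm : i ∈ F.toFinite.toFinset
        · rw [Finset.insert_eq_self.mpr hm]
          exact Nat.le_add_left _ _
        · rw [Finset.sum_insert hm]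
          rfl
    _ = ℓ := by rw [hγi, Nat.zero_add, hFℓ]
  · -- γ i > 0 : decrement at i
    set γ' := Function.update γ i (γ i - 1) with hγ'
    have hle : γ' ≤ γ := by
      intro x
      rcases eq_or_ne x i with rfl | hx
      · simp [hγ']
      · simp [hγ', Function.update_of_ne hx]
    have hne : γ' ≠ γ := by
      intro heq
      have := congrFun heq i
      simp [hγ'] at this
      omega
    have hnc := hbasic.2 γ' hle hne
    rw [IsCoverOn] at hnc
    push_neg at hnc
    obtain ⟨F, hF, hFlt⟩ := hnc
    have hiF : i ∈ F := by
      by_contra hiff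
      rw [hγ', setWt_update_eq_of_not_mem γ i _ F hiff] at hFlt
      exact absurd (hbasic.1 F hF) (not_le.mpr hFlt)
    refine ⟨F, hF, hiF, le_antisymm ?_ (hbasic.1 F hF)⟩
    have h2 := setWt_update_ge γ i hγi F
    rw [← hγ'] at h2
    omega
end

section
/- Let γ be a basic ℓ-cover of a matroid M on a finite ground set, let F and G be focal bases of γ, and let a ∈ ℕ. Then (F ∩ γ⁻¹(a)) ∪ (G \ γ⁻¹(a)) is again a focal basis of γ, and |F ∩ γ⁻¹(a)| = |G ∩ γ⁻¹(a)|. -/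
open Matroid

open Set

lemma setWt_exchange {α : Type*} [Fintype α] (γ : α → ℕ) {G : Set α} {e f : α}
    (heG : e ∉ G) (hfG : f ∈ G) :
    setWt γ (insert e (G \ {f})) + γ f = setWt γ G + γ e := by
  classical
  have h1 : (insert e (G \ {f})).toFinite.toFinset
      = insert e (G.toFinite.toFinset.erase f) := by
    ext x
    simp only [Set.Finite.mem_toFinset, Finset.mem_insert, Finset.mem_erase,
      Set.mem_insert_iff, Set.mem_diff, Set.mem_singleton_iff]
    tauto
  have hnot : e ∉ G.toFinite.toFinset.erase f := by
    simp only [Finset.mem_erase, Set.Finite.mem_toFinset]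
    exact fun h => heG h.2
  rw [setWt, setWt, h1, Finset.sum_insert hnot]
  have h2 : ∑ x ∈ G.toFinite.toFinset.erase f, γ x + γ f = ∑ x ∈ G.toFinite.toFinset, γ x :=
    Finset.sum_erase_add _ _ (by simpa using hfG)
  omega

/-- Symmetric exchange property for matroid bases (on a full ground set). -/
lemma sym_exchange {α : Type*} [Fintype α] {M : Matroid α} (hE : M.E = Set.univ)
    {B₁ B₂ : Set α} (h1 : M.IsBase B₁) (h2 : M.IsBase B₂) {e : α} (he : e ∈ B₁ \ B₂) :
    ∃ f ∈ B₂ \ B₁, M.IsBase (insert f (B₁ \ {e})) ∧ M.IsBase (insert e (B₂ \ {f})) := by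
  classical
  have hground : ∀ X : Set α, X ⊆ M.E := fun X x _ => by rw [hE]; trivial
  have heclB2 : e ∈ M.closure B₂ := by rw [h2.closure_eq, hE]; trivial
  -- choose a minimal finset I ⊆ B₂ with e ∈ closure I
  set S : Finset (Finset α) :=
    Finset.univ.filter (fun I : Finset α => (I : Set α) ⊆ B₂ ∧ e ∈ M.closure (I : Set α)) with hS
  have hSne : S.Nonempty := by
    refine ⟨B₂.toFinset, ?_⟩
    simp only [hS, Finset.mem_filter, Finset.mem_univ, true_and, Set.coe_toFinset]
    exact ⟨subset_rfl, heclB2⟩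
  obtain ⟨I, hIS, hImin⟩ := Finset.exists_min_image S Finset.card hSne
  rw [hS, Finset.mem_filter] at hIS
  obtain ⟨-, hIB2, heclI⟩ := hIS
  -- minimality: removing any element of I loses e from the closure
  have hminI : ∀ f ∈ I, e ∉ M.closure ((I : Set α) \ {f}) := by
    intro f hf hecl
    have hcoe : (I.erase f : Set α) = (I : Set α) \ {f} := by simp
    have hmem : I.erase f ∈ S := by
      rw [hS, Finset.mem_filter]
      refine ⟨Finset.mem_univ _, by rw [hcoe]; exact diff_subset.trans hIB2,
        by rw [hcoe]; exact hecl⟩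
    have := hImin _ hmem
    have hlt : (I.erase f).card < I.card := Finset.card_erase_lt_of_mem hf
    omega
  -- there must be f ∈ I not in the closure of B₁ \ {e}
  have hB1e : e ∉ M.closure (B₁ \ {e}) := h1.indep.notMem_closure_diff_of_mem he.1
  have hex : ∃ f ∈ I, f ∉ M.closure (B₁ \ {e}) := by
    by_contra hcon
    push_neg at hcon
    have hsub : (I : Set α) ⊆ M.closure (B₁ \ {e}) := fun x hx => hcon x hx
    have hcl : M.closure (I : Set α) ⊆ M.closure (B₁ \ {e}) := by
      have := M.closure_subset_closure hsub
      rwa [M.closure_closure] at this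
    exact hB1e (hcl heclI)
  obtain ⟨f, hfI, hfcl⟩ := hex
  have hfB2 : f ∈ B₂ := hIB2 hfI
  have hfB1 : f ∉ B₁ := by
    intro hfB1
    have hfe : f ≠ e := by rintro rfl; exact he.2 hfB2
    exact hfcl (M.subset_closure _ (hground _) ⟨hfB1, hfe⟩)
  refine ⟨f, ⟨hfB2, hfB1⟩, ?_, ?_⟩
  · -- B₁ - e + f is a base
    have hInd1 : M.Indep (B₁ \ {e}) := h1.indep.subset diff_subset
    have hfnot : f ∉ B₁ \ {e} := fun h => hfB1 h.1
    have hind : M.Indep (insert f (B₁ \ {e})) :=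
      (hInd1.insert_indep_iff_of_notMem hfnot).2 ⟨by rw [hE]; trivial, hfcl⟩
    exact h1.exchange_isBase_of_indep hfB1 hind
  · -- B₂ - f + e is a base
    have hInd2 : M.Indep (B₂ \ {f}) := h2.indep.subset diff_subset
    have hecl2 : e ∉ M.closure (B₂ \ {f}) := by
      intro hecon
      have h3 : e ∉ M.closure ((I : Set α) \ {f}) := hminI f hfI
      have h4 : e ∈ M.closure (insert f ((I : Set α) \ {f})) := by
        rw [Set.insert_diff_singleton, Set.insert_eq_of_mem (show f ∈ (I : Set α) from hfI)]
        exact heclI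
      have h5 := Matroid.closure_exchange ⟨h4, h3⟩
      have h6 : f ∈ M.closure (insert e (B₂ \ {f})) :=
        M.closure_subset_closure (insert_subset_insert (diff_subset_diff_left hIB2)) h5.1
      rw [Matroid.closure_insert_eq_of_mem_closure hecon] at h6
      exact h2.indep.notMem_closure_diff_of_mem hfB2 h6
    have henot : e ∉ B₂ \ {f} := fun h => he.2 h.1
    have hind : M.Indep (insert e (B₂ \ {f})) :=
      (hInd2.insert_indep_iff_of_notMem henot).2 ⟨by rw [hE]; trivial, hecl2⟩
    exact h2.exchange_isBase_of_indep he.2 hind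

/-- Weighted symmetric exchange: for focal bases, the exchanged element has equal weight
and the exchanged base is again focal. -/
lemma wt_exchange {α : Type*} [Fintype α] {M : Matroid α} (hE : M.E = Set.univ)
    {ℓ : ℕ} {γ : α → ℕ} (hcov : IsCoverOn {F | M.IsBase F} ℓ γ)
    {F G : Set α} (hF : M.IsBase F) (hFw : setWt γ F = ℓ)
    (hG : M.IsBase G) (hGw : setWt γ G = ℓ) {e : α} (he : e ∈ F \ G) :
    ∃ f ∈ G \ F, γ f = γ e ∧ M.IsBase (insert e (G \ {f})) ∧
      setWt γ (insert e (G \ {f})) = ℓ := by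
  obtain ⟨f, hf, hBF, hBG⟩ := sym_exchange hE hF hG he
  have h1 : ℓ ≤ setWt γ (insert f (F \ {e})) := hcov _ hBF
  have h2 : ℓ ≤ setWt γ (insert e (G \ {f})) := hcov _ hBG
  have h3 := setWt_exchange γ hf.2 he.1
  have h4 := setWt_exchange γ he.2 hf.1
  refine ⟨f, hf, by omega, hBG, by omega⟩

lemma stmt6_aux {α : Type*} [Fintype α] {M : Matroid α} (hE : M.E = Set.univ)
    {ℓ : ℕ} {γ : α → ℕ} (hcov : IsCoverOn {F | M.IsBase F} ℓ γ)
    {F : Set α} (hF : M.IsBase F) (hFw : setWt γ F = ℓ) (a : ℕ) :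
    ∀ n (G : Set α), ((F ∩ γ ⁻¹' {a}) \ G).ncard = n → M.IsBase G → setWt γ G = ℓ →
      M.IsBase ((F ∩ γ ⁻¹' {a}) ∪ (G \ γ ⁻¹' {a})) ∧
      setWt γ ((F ∩ γ ⁻¹' {a}) ∪ (G \ γ ⁻¹' {a})) = ℓ ∧
      (F ∩ γ ⁻¹' {a}).ncard = (G ∩ γ ⁻¹' {a}).ncard := by
  intro n
  induction n using Nat.strong_induction_on with
  | _ n IH =>
    intro G hcard hG hGw
    set A : Set α := γ ⁻¹' {a} with hA
    rcases Nat.eq_zero_or_pos n with hn0 | hnpos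
    · -- base case: F ∩ A ⊆ G, and then G ∩ A = F ∩ A
      rw [hn0, Set.ncard_eq_zero (Set.toFinite _), diff_eq_empty] at hcard
      have hGA : G ∩ A = F ∩ A := by
        apply Set.Subset.antisymm
        · rintro e ⟨heG, heA⟩
          by_contra heF
          have heF' : e ∉ F := fun h => heF ⟨h, heA⟩
          obtain ⟨f, hfFG, hfw, -, -⟩ := wt_exchange hE hcov hG hGw hF hFw ⟨heG, heF'⟩
          have hfA : f ∈ A := by
            rw [hA, Set.mem_preimage, Set.mem_singleton_iff, hfw]
            exact heA
          exact hfFG.2 (hcard ⟨hfFG.1, hfA⟩)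
        · rintro e ⟨heF, heA⟩
          exact ⟨hcard ⟨heF, heA⟩, heA⟩
      have hU : (F ∩ A) ∪ (G \ A) = G := by rw [← hGA, Set.inter_union_diff]
      rw [hU, hGA]
      exact ⟨hG, hGw, rfl⟩
    · -- inductive step
      have hne : ((F ∩ A) \ G).Nonempty := by
        rw [← Set.ncard_pos (Set.toFinite _)] at *
        omega
      obtain ⟨e, heFA, heG⟩ := hne
      have heA : e ∈ A := heFA.2
      have hea : γ e = a := heA
      obtain ⟨f, hfGF, hfw, hG'base, hG'w⟩ :=
        wt_exchange hE hcov hF hFw hG hGw ⟨heFA.1, heG⟩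
      have hfA : f ∈ A := by
        rw [hA, Set.mem_preimage, Set.mem_singleton_iff, hfw, hea]
      set G' : Set α := insert e (G \ {f}) with hG'
      have hfF : f ∉ F := hfGF.2
      have hdiff : (F ∩ A) \ G' = ((F ∩ A) \ G) \ {e} := by
        ext x
        have hxf : x ∈ F ∩ A → ¬ x = f := fun h hh => hfF (hh ▸ h.1)
        simp only [hG', Set.mem_diff, Set.mem_insert_iff, Set.mem_singleton_iff]
        tauto
      have hcard' : ((F ∩ A) \ G').ncard = n - 1 := by
        rw [hdiff]
        have := Set.ncard_diff_singleton_add_one (show e ∈ (F ∩ A) \ G from ⟨heFA, heG⟩)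
          (Set.toFinite _)
        omega
      have hGA' : G' \ A = G \ A := by
        ext x
        have h1 : x = e → x ∈ A := fun h => h ▸ heA
        have h2 : x = f → x ∈ A := fun h => h ▸ hfA
        simp only [hG', Set.mem_diff, Set.mem_insert_iff, Set.mem_singleton_iff]
        tauto
      have hGAcard : (G' ∩ A).ncard = (G ∩ A).ncard := by
        have hset : G' ∩ A = insert e ((G ∩ A) \ {f}) := by
          ext x
          have h1 : x = e → x ∈ A := fun h => h ▸ heA
          simp only [hG', Set.mem_inter_iff, Set.mem_diff, Set.mem_insert_iff,
            Set.mem_singleton_iff]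
          tauto
        rw [hset, Set.ncard_insert_of_notMem (fun h => heG h.1.1) (Set.toFinite _)]
        have := Set.ncard_diff_singleton_add_one
          (show f ∈ G ∩ A from ⟨hfGF.1, hfA⟩) (Set.toFinite _)
        omega
      obtain ⟨hb, hw, hc⟩ := IH (n - 1) (by omega) G' hcard' hG'base hG'w
      rw [hGA'] at hb hw
      rw [hGAcard] at hc
      exact ⟨hb, hw, hc⟩

/-- let `γ` be a basic `ℓ`-cover of a matroid `M`, `F` and `G` focal bases of `γ`,
and `a : ℕ`. Then `(F ∩ γ⁻¹(a)) ∪ (G \ γ⁻¹(a))` is again a focal basis of `γ`, and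
`|F ∩ γ⁻¹(a)| = |G ∩ γ⁻¹(a)|`. -/
theorem stmt6 {α : Type*} [Fintype α] (M : Matroid α) (hE : M.E = Set.univ)
    (ℓ : ℕ) (γ : α → ℕ) (hbasic : IsBasicCoverOn {F | M.IsBase F} ℓ γ)
    (F G : Set α) (hF : M.IsBase F) (hFfocal : setWt γ F = ℓ)
    (hG : M.IsBase G) (hGfocal : setWt γ G = ℓ) (a : ℕ) :
    (M.IsBase ((F ∩ (γ ⁻¹' {a})) ∪ (G \ (γ ⁻¹' {a}))) ∧
      setWt γ ((F ∩ (γ ⁻¹' {a})) ∪ (G \ (γ ⁻¹' {a}))) = ℓ) ∧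
    (F ∩ (γ ⁻¹' {a})).ncard = (G ∩ (γ ⁻¹' {a})).ncard := by
  obtain ⟨hb, hw, hc⟩ := stmt6_aux hE hbasic.1 hF hFfocal a
    ((F ∩ γ ⁻¹' {a}) \ G).ncard G rfl hG hGfocal
  exact ⟨⟨hb, hw⟩, hc⟩
end

section
/- Let M be a matroid on a finite ground set E, let μ : E → ℕ with A := supp(μ), and suppose x^μ ∉ J(M) (equivalently, some basis of M is disjoint from A). Then J(M) : x^μ = J(M ⧹ A), the cover ideal of the deletion of A from M; furthermore, for every ℓ ≥ 1, J(M ⧹ A)^{(ℓ)} = J(M)^{(ℓ)} : (x^μ)^ℓ, i.e., ⋂_{F basis of M ⧹ A} p_F^ℓ = (⋂_{F basis of M} p_F^ℓ) : x^{ℓ·μ}. -/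
open Matroid MvPolynomial

/-- The squarefree monomial `x_S = ∏_{i ∈ S} x_i`. -/
noncomputable def xS {α : Type*} [Fintype α] (K : Type*) [Field K] (S : Set α) :
    MvPolynomial α K :=
  ∏ i ∈ S.toFinite.toFinset, MvPolynomial.X i

/-- The monomial `x^γ = ∏ i, x_i ^ γ(i)`. -/
noncomputable def xPow {α : Type*} [Fintype α] (K : Type*) [Field K] (γ : α → ℕ) :
    MvPolynomial α K :=
  ∏ i : α, (MvPolynomial.X i : MvPolynomial α K) ^ γ i

/-- `p_S`: the ideal of `K[x_i : i ∈ α]` generated by the variables `x_i`, `i ∈ S`. -/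
noncomputable def pS {α : Type*} (K : Type*) [Field K] (S : Set α) :
    Ideal (MvPolynomial α K) :=
  Ideal.span (MvPolynomial.X '' S)

/-- The cover ideal `J(M) = ⋂_{F basis of M} p_F` of a matroid `M`. -/
noncomputable def coverIdeal {α : Type*} [Fintype α] (K : Type*) [Field K] (M : Matroid α) :
    Ideal (MvPolynomial α K) :=
  ⨅ F ∈ {F : Set α | M.IsBase F}, pS K F

/-- The `ℓ`-th symbolic power `J(M)^{(ℓ)} = ⋂_{F basis of M} p_F^ℓ` of the cover ideal. -/
noncomputable def symbPow {α : Type*} [Fintype α] (K : Type*) [Field K] (M : Matroid α)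
    (ℓ : ℕ) : Ideal (MvPolynomial α K) :=
  ⨅ F ∈ {F : Set α | M.IsBase F}, (pS K F) ^ ℓ

/-- `SF_ℓ(J(M))`: the ideal generated by the squarefree monomials of `J(M)^{(ℓ)}`, i.e. by the
monomials `x_S` with `|S ∩ F| ≥ ℓ` for every basis `F` of `M`. -/
noncomputable def SF {α : Type*} [Fintype α] (K : Type*) [Field K] (M : Matroid α)
    (ℓ : ℕ) : Ideal (MvPolynomial α K) :=
  Ideal.span {m : MvPolynomial α K |
    ∃ S : Set α, m = xS K S ∧ ∀ F : Set α, M.IsBase F → ℓ ≤ (S ∩ F).ncard}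

/-- Matroid deletion: `M ⧹ D` is the restriction of `M` to `M.E \ D`. -/
def mdel {α : Type*} (M : Matroid α) (D : Set α) : Matroid α := M ↾ (M.E \ D)

/-- Matroid contraction: `M ⧸ C = (M✶ ⧹ C)✶`. -/
def mcon {α : Type*} (M : Matroid α) (C : Set α) : Matroid α := (mdel M✶ C)✶

/-- A cocircuit of `M`: a minimal subset of the ground set meeting every basis of `M`. -/
def IsCocircuit {α : Type*} (M : Matroid α) (C : Set α) : Prop :=
  C ⊆ M.E ∧ (∀ F, M.IsBase F → (C ∩ F).Nonempty) ∧
    ∀ C' : Set α, C' ⊂ C → ∃ F, M.IsBase F ∧ C' ∩ F = ∅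

section Aux

variable {α : Type*} [Fintype α] {K : Type*} [Field K]

/-- The `F`-degree of an exponent vector: the sum of exponents of variables in `F`. -/
private noncomputable def fdeg (F : Set α) (m : α →₀ ℕ) : ℕ :=
  ∑ i ∈ F.toFinite.toFinset, m i

private lemma fdeg_add (F : Set α) (a b : α →₀ ℕ) :
    fdeg F (a + b) = fdeg F a + fdeg F b := by
  simp [fdeg, Finset.sum_add_distrib]

private lemma fdeg_single (F : Set α) {i : α} (hi : i ∈ F) :
    fdeg F (Finsupp.single i 1) = 1 := by
  classical
  simp only [fdeg, Finsupp.single_apply, Finset.sum_ite_eq]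
  simp only [Set.Finite.mem_toFinset]
  exact if_pos hi

private lemma one_le_fdeg_iff (F : Set α) (m : α →₀ ℕ) :
    1 ≤ fdeg F m ↔ ∃ i ∈ F, m i ≠ 0 := by
  rw [Nat.one_le_iff_ne_zero, fdeg, Ne, Finset.sum_eq_zero_iff]
  push_neg
  constructor
  · rintro ⟨i, hi, hne⟩
    exact ⟨i, (Set.Finite.mem_toFinset _).1 hi, hne⟩
  · rintro ⟨i, hi, hne⟩
    exact ⟨i, (Set.Finite.mem_toFinset _).2 hi, hne⟩

private lemma mem_pS_iff (F : Set α) (p : MvPolynomial α K) :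
    p ∈ pS K F ↔ ∀ m ∈ p.support, 1 ≤ fdeg F m := by
  rw [pS, mem_ideal_span_X_image]
  exact forall₂_congr fun m _ => (one_le_fdeg_iff F m).symm

private lemma mem_pS_pow (F : Set α) (ℓ : ℕ) (p : MvPolynomial α K) :
    p ∈ (pS K F) ^ ℓ ↔ ∀ m ∈ p.support, ℓ ≤ fdeg F m := by
  classical
  induction ℓ generalizing p with
  | zero => simp [pow_zero, Ideal.one_eq_top]
  | succ ℓ IH =>
    constructor
    · intro hp
      rw [pow_succ] at hp
      refine Submodule.mul_induction_on hp ?_ ?_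
      · intro a ha b hb m hm
        obtain ⟨ma, hma, mb, hmb, rfl⟩ := Finset.mem_add.1 (MvPolynomial.support_mul a b hm)
        rw [fdeg_add]
        exact Nat.add_le_add ((IH a).1 ha ma hma) ((mem_pS_iff F b).1 hb mb hmb)
      · intro x y hx hy m hm
        rcases Finset.mem_union.1 (MvPolynomial.support_add hm) with h | h
        · exact hx m h
        · exact hy m h
    · intro hp
      rw [← MvPolynomial.support_sum_monomial_coeff p]
      refine Ideal.sum_mem _ fun m hm => ?_
      have hdeg : ℓ + 1 ≤ fdeg F m := hp m hm
      obtain ⟨i, hiF, hi⟩ := (one_le_fdeg_iff F m).1 (le_trans (Nat.le_add_left 1 ℓ) hdeg)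
      have hle : Finsupp.single i 1 ≤ m := Finsupp.single_le_iff.2 (Nat.one_le_iff_ne_zero.2 hi)
      have hsum : (m - Finsupp.single i 1) + Finsupp.single i 1 = m := tsub_add_cancel_of_le hle
      have hXi : (MvPolynomial.X i : MvPolynomial α K) = MvPolynomial.monomial
          (Finsupp.single i 1) 1 := by
        rw [← MvPolynomial.X_pow_eq_monomial, pow_one]
      have heq : MvPolynomial.monomial m (MvPolynomial.coeff m p) =
          MvPolynomial.monomial (m - Finsupp.single i 1) (MvPolynomial.coeff m p) *
            MvPolynomial.X i := by
        rw [hXi, MvPolynomial.monomial_mul, hsum, mul_one]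
      rw [heq, pow_succ]
      refine Ideal.mul_mem_mul ((IH _).2 ?_) (Ideal.subset_span ⟨i, hiF, rfl⟩)
      intro m' hm'
      have hm'' : m' = m - Finsupp.single i 1 :=
        Finset.mem_singleton.1 (MvPolynomial.support_monomial_subset hm')
      subst hm''
      have hfd := fdeg_add F (m - Finsupp.single i 1) (Finsupp.single i 1)
      rw [hsum, fdeg_single F hiF] at hfd
      omega

private lemma xPow_eq_monomial (μ : α → ℕ) :
    xPow K μ = MvPolynomial.monomial (Finsupp.equivFunOnFinite.symm μ) (1 : K) := by
  classical
  set ν := Finsupp.equivFunOnFinite.symm μ with hν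
  have happ : ∀ i, ν i = μ i := fun i => rfl
  rw [MvPolynomial.monomial_eq, map_one, one_mul, Finsupp.prod, xPow,
    Finset.prod_subset (Finset.subset_univ ν.support)
      (fun i _ hi => by rw [Finsupp.notMem_support_iff.1 hi, pow_zero])]
  exact Finset.prod_congr rfl fun i _ => by rw [happ]

private lemma fdeg_equivFun_eq_zero {F : Set α} {μ : α → ℕ}
    (h : Disjoint F (Function.support μ)) :
    fdeg F (Finsupp.equivFunOnFinite.symm μ) = 0 := by
  refine Finset.sum_eq_zero fun i hi => ?_
  have hiF : i ∈ F := (Set.Finite.mem_toFinset _).1 hi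
  have : i ∉ Function.support μ := fun hμ => Set.disjoint_left.1 h hiF hμ
  simpa [Function.mem_support, not_not] using this

private lemma base_mdel_iff {M : Matroid α} (hE : M.E = Set.univ) {A : Set α}
    (hex : ∃ B, M.IsBase B ∧ Disjoint B A) (F : Set α) :
    (mdel M A).IsBase F ↔ M.IsBase F ∧ Disjoint F A := by
  obtain ⟨B, hB, hBA⟩ := hex
  have hXE : M.E \ A ⊆ M.E := Set.diff_subset
  rw [mdel, Matroid.isBase_restrict_iff hXE]
  constructor
  · intro h
    have hBsub : B ⊆ M.E \ A := fun x hx =>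
      ⟨hB.subset_ground hx, fun hxA => Set.disjoint_left.1 hBA hx hxA⟩
    exact ⟨h.isBase_of_isBase_subset hB hBsub,
      Set.disjoint_left.2 fun x hxF hxA => (h.subset hxF).2 hxA⟩
  · rintro ⟨hF, hFA⟩
    exact hF.isBasis_ground.isBasis_subset
      (fun x hx => ⟨hF.subset_ground hx, Set.disjoint_left.1 hFA hx⟩) hXE

private lemma xPow_mem_pS_iff (μ : α → ℕ) (F : Set α) :
    xPow K μ ∈ pS K F ↔ ¬ Disjoint F (Function.support μ) := by
  rw [mem_pS_iff]
  have hsupp : (xPow K μ : MvPolynomial α K).support = {Finsupp.equivFunOnFinite.symm μ} := by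
    classical
    rw [xPow_eq_monomial, MvPolynomial.support_monomial, if_neg one_ne_zero]
  rw [hsupp]
  simp only [Finset.mem_singleton, forall_eq, one_le_fdeg_iff]
  constructor
  · rintro ⟨i, hiF, hi⟩
    exact fun hd => Set.disjoint_left.1 hd hiF (by simpa using hi)
  · intro hnd
    rw [Set.not_disjoint_iff] at hnd
    obtain ⟨i, hiF, hiμ⟩ := hnd
    exact ⟨i, hiF, by simpa using hiμ⟩

/-- The main computation, valid for every `ℓ`. -/
private lemma key_s11 (M : Matroid α) (hE : M.E = Set.univ) (μ : α → ℕ)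
    (hex : ∃ B, M.IsBase B ∧ Disjoint B (Function.support μ)) (ℓ : ℕ) :
    symbPow K (mdel M (Function.support μ)) ℓ =
      Submodule.colon (symbPow K M ℓ) (Ideal.span {(xPow K μ) ^ ℓ}) := by
  classical
  set A := Function.support μ with hA
  set ν := Finsupp.equivFunOnFinite.symm μ with hν
  have hxpow : (xPow K μ : MvPolynomial α K) ^ ℓ = MvPolynomial.monomial (ℓ • ν) (1 : K) := by
    rw [xPow_eq_monomial, MvPolynomial.monomial_pow, one_pow]
  ext p
  rw [Ideal.mem_colon_span_singleton]
  simp only [symbPow, Ideal.mem_iInf, Set.mem_setOf_eq]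
  constructor
  · intro h F hF
    by_cases hd : Disjoint F A
    · exact Ideal.mul_mem_right _ _ (h F ((base_mdel_iff hE hex F).2 ⟨hF, hd⟩))
    · -- `(x^μ)^ℓ ∈ p_F^ℓ`, hence the product is in
      refine Ideal.mul_mem_left _ _ ?_
      rw [hxpow, mem_pS_pow]
      intro m hm
      have hm' : m = ℓ • ν := Finset.mem_singleton.1 (MvPolynomial.support_monomial_subset hm)
      subst hm'
      rw [Set.not_disjoint_iff] at hd
      obtain ⟨i, hiF, hiA⟩ := hd
      have h1 : 1 ≤ fdeg F ν := (one_le_fdeg_iff F ν).2 ⟨i, hiF, by simpa [hA, hν] using hiA⟩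
      have : fdeg F (ℓ • ν) = ℓ * fdeg F ν := by
        simp [fdeg, Finset.mul_sum]
      rw [this]
      calc ℓ = ℓ * 1 := (mul_one ℓ).symm
        _ ≤ ℓ * fdeg F ν := Nat.mul_le_mul_left ℓ h1
  · intro h F hF
    obtain ⟨hFb, hFd⟩ := (base_mdel_iff hE hex F).1 hF
    have hmem := h F hFb
    rw [hxpow, mem_pS_pow] at hmem
    rw [mem_pS_pow]
    intro m hm
    have hcoeff : MvPolynomial.coeff (m + ℓ • ν) (p * MvPolynomial.monomial (ℓ • ν) (1 : K)) =
        MvPolynomial.coeff m p := by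
      rw [MvPolynomial.coeff_mul_monomial, mul_one]
    have hmem' : m + ℓ • ν ∈ (p * MvPolynomial.monomial (ℓ • ν) (1 : K)).support := by
      rw [MvPolynomial.mem_support_iff, hcoeff]
      exact MvPolynomial.mem_support_iff.1 hm
    have hle := hmem _ hmem'
    have hν0 : fdeg F ν = 0 := fdeg_equivFun_eq_zero hFd
    have : fdeg F (m + ℓ • ν) = fdeg F m := by
      rw [fdeg_add]
      have : fdeg F (ℓ • ν) = ℓ * fdeg F ν := by simp [fdeg, Finset.mul_sum]
      rw [this, hν0, Nat.mul_zero, Nat.add_zero]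
    rwa [this] at hle

end Aux

/-- if `μ : E → ℕ` has support `A` and `x^μ ∉ J(M)`, then
`J(M) : x^μ = J(M ⧹ A)`, and for every `ℓ ≥ 1`,
`J(M ⧹ A)^{(ℓ)} = J(M)^{(ℓ)} : (x^μ)^ℓ`. -/
theorem stmt11 {α : Type*} [Fintype α] (K : Type*) [Field K]
    (M : Matroid α) (hE : M.E = Set.univ) (μ : α → ℕ)
    (hnotmem : xPow K μ ∉ coverIdeal K M) :
    Submodule.colon (coverIdeal K M) (Ideal.span {xPow K μ}) =
      coverIdeal K (mdel M (Function.support μ)) ∧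
    ∀ ℓ : ℕ, 1 ≤ ℓ →
      symbPow K (mdel M (Function.support μ)) ℓ =
        Submodule.colon (symbPow K M ℓ) (Ideal.span {(xPow K μ) ^ ℓ}) := by
  classical
  have hex : ∃ B, M.IsBase B ∧ Disjoint B (Function.support μ) := by
    simp only [coverIdeal, Ideal.mem_iInf, Set.mem_setOf_eq, not_forall] at hnotmem
    obtain ⟨F, hF, hnot⟩ := hnotmem
    refine ⟨F, hF, ?_⟩
    rw [xPow_mem_pS_iff, not_not] at hnot
    exact hnot
  constructor
  · have hc : ∀ M' : Matroid α, coverIdeal K M' = symbPow K M' 1 := fun M' => by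
      simp [coverIdeal, symbPow, pow_one]
    rw [hc, hc, ← pow_one (xPow K μ)]
    exact (key_s11 (K := K) M hE μ hex 1).symm
  · intro ℓ _
    exact key_s11 (K := K) M hE μ hex ℓ
end

section
/- Let M be a matroid on a finite ground set E, let A be an independent set of M, let ℓ ≥ 1, and let δ : E → ℕ with δ(a) = 0 for all a ∈ A. Then δ is a basic ℓ-cover of the contraction M ⧸ A if and only if δ is a basic ℓ-cover of M. -/
open Matroid

lemma setWt_union_zero {α : Type*} [Fintype α] {γ : α → ℕ} {A : Set α}
    (hγA : ∀ a ∈ A, γ a = 0) (B : Set α) : setWt γ (B ∪ A) = setWt γ B := by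
  symm
  apply Finset.sum_subset
  · intro x hx
    simp only [Set.Finite.mem_toFinset] at hx ⊢
    exact Or.inl hx
  · intro x hx hx'
    simp only [Set.Finite.mem_toFinset] at hx hx'
    exact hγA x (hx.resolve_left hx')

/-- Characterisation of the bases of the contraction by an independent set. -/
lemma mcon_base_iff {α : Type*} {M : Matroid α} (hE : M.E = Set.univ)
    {A : Set α} (hA : M.Indep A) (B : Set α) :
    (mcon M A).IsBase B ↔ Disjoint B A ∧ M.IsBase (B ∪ A) := by
  have hEd : M✶.E = Set.univ := by rw [Matroid.dual_ground, hE]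
  have hR : (Set.univ \ A : Set α) ⊆ M✶.E := by rw [hEd]; exact Set.diff_subset
  rw [mcon, mdel, hEd, Matroid.dual_isBase_iff', Matroid.restrict_ground_eq,
    Matroid.isBase_restrict_iff hR]
  rw [Set.subset_diff, and_iff_right (Set.subset_univ B)]
  constructor
  · rintro ⟨hbasis, hdisj⟩
    refine ⟨hdisj, ?_⟩
    have hDeq : (Set.univ \ A) \ B = Set.univ \ (B ∪ A) := by
      rw [Set.diff_diff, Set.union_comm]
    rw [hDeq] at hbasis
    -- B ∪ A contains a base of M
    obtain ⟨D', hD', hDD'⟩ := hbasis.indep.exists_isBase_superset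
    have hB0 : M.IsBase (M.E \ D') := hD'.compl_isBase_of_dual
    have hB0sub : M.E \ D' ⊆ B ∪ A := by
      rw [hE]
      intro x hx
      by_contra hxBA
      exact hx.2 (hDD' ⟨Set.mem_univ x, hxBA⟩)
    -- extend A to a basis J of B ∪ A; J is a base of M
    have hABA : A ⊆ B ∪ A := Set.subset_union_right
    have hBAE : B ∪ A ⊆ M.E := by rw [hE]; exact Set.subset_univ _
    obtain ⟨J, hJ, hAJ⟩ := hA.subset_isBasis_of_subset hABA hBAE
    have hJbase : M.IsBase J := hB0.isBase_of_isBasis_superset hB0sub hJ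
    have hJc : M✶.IsBase (Set.univ \ J) := by
      have := hJbase.compl_isBase_dual
      rwa [hE] at this
    have h1 : Set.univ \ (B ∪ A) ⊆ Set.univ \ J :=
      Set.diff_subset_diff_right hJ.subset
    have h2 : Set.univ \ J ⊆ Set.univ \ A := Set.diff_subset_diff_right hAJ
    have heq : Set.univ \ (B ∪ A) = Set.univ \ J :=
      hbasis.eq_of_subset_indep hJc.indep h1 h2
    have : B ∪ A = J := by
      have := congrArg (Set.univ \ ·) heq
      simpa [Set.diff_diff_cancel_left (Set.subset_univ (B ∪ A)),
        Set.diff_diff_cancel_left (Set.subset_univ J)] using this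
    rwa [this]
  · rintro ⟨hdisj, hbase⟩
    refine ⟨?_, hdisj⟩
    have hDeq : (Set.univ \ A) \ B = Set.univ \ (B ∪ A) := by
      rw [Set.diff_diff, Set.union_comm]
    rw [hDeq]
    have hDbase : M✶.IsBase (Set.univ \ (B ∪ A)) := by
      have := hbase.compl_isBase_dual
      rwa [hE] at this
    have hX : (Set.univ \ A : Set α) ⊆ M✶.E := hR
    rw [Matroid.isBasis_iff hX]
    refine ⟨hDbase.indep, Set.diff_subset_diff_right Set.subset_union_right, ?_⟩
    intro J hJ hDJ _
    exact hDbase.eq_of_subset_indep hJ hDJ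

/-- For a weight function vanishing on `A`, being an `ℓ`-cover of `M ⧸ A` and of `M`
are equivalent. -/
lemma cover_mcon_iff {α : Type*} [Fintype α] {M : Matroid α} (hE : M.E = Set.univ)
    {A : Set α} (hA : M.Indep A) (ℓ : ℕ) {γ : α → ℕ} (hγA : ∀ a ∈ A, γ a = 0) :
    IsCoverOn {F | (mcon M A).IsBase F} ℓ γ ↔ IsCoverOn {F | M.IsBase F} ℓ γ := by
  constructor
  · intro h F hF
    obtain ⟨B', hB', hAB', hsub⟩ := hA.exists_isBase_subset_union_isBase hF
    have hBbase : (mcon M A).IsBase (B' \ A) := by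
      rw [mcon_base_iff hE hA]
      refine ⟨Set.disjoint_sdiff_left, ?_⟩
      rwa [Set.diff_union_of_subset hAB']
    have h1 : ℓ ≤ setWt γ (B' \ A) := h _ hBbase
    have h2 : B' \ A ⊆ F := by
      intro x hx
      rcases hsub hx.1 with hxA | hxF
      · exact absurd hxA hx.2
      · exact hxF
    exact h1.trans (setWt_mono γ h2)
  · intro h B hB
    rw [Set.mem_setOf_eq, mcon_base_iff hE hA] at hB
    have := h _ hB.2
    rwa [setWt_union_zero hγA] at this

/-- let `A` be an independent set of a matroid `M`, `ℓ ≥ 1`, and `δ : E → ℕ`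
vanish on `A`. Then `δ` is a basic `ℓ`-cover of the contraction `M ⧸ A` if and only if it is
a basic `ℓ`-cover of `M`. -/
theorem stmt12 {α : Type*} [Fintype α] (M : Matroid α) (hE : M.E = Set.univ)
    (A : Set α) (hA : M.Indep A) (ℓ : ℕ) (hℓ : 1 ≤ ℓ)
    (δ : α → ℕ) (hδA : ∀ a ∈ A, δ a = 0) :
    IsBasicCoverOn {F | (mcon M A).IsBase F} ℓ δ ↔
      IsBasicCoverOn {F | M.IsBase F} ℓ δ := by
  have key : ∀ γ : α → ℕ, γ ≤ δ →
      (IsCoverOn {F | (mcon M A).IsBase F} ℓ γ ↔ IsCoverOn {F | M.IsBase F} ℓ γ) := by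
    intro γ hle
    exact cover_mcon_iff hE hA ℓ (fun a ha => Nat.le_zero.mp (hδA a ha ▸ hle a))
  constructor
  · rintro ⟨hc, hmin⟩
    exact ⟨(key δ le_rfl).mp hc,
      fun γ' hle hne hcov => hmin γ' hle hne ((key γ' hle).mpr hcov)⟩
  · rintro ⟨hc, hmin⟩
    exact ⟨(key δ le_rfl).mpr hc,
      fun γ' hle hne hcov => hmin γ' hle hne ((key γ' hle).mp hcov)⟩
end
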